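/- Assume the null independence-across-studies condition and that null p-values are stochastically at least uniform. Let S₁, S₂ be arbitrary selection rules, 𝒮_i = S_i(P_i), S_i = |𝒮_i|, α₂ = α−α₁. Then the FWER for replicability analysis of the Bonferroni replicability procedure, which rejects the features j ∈ 𝒮₁∩𝒮₂ with P_{1j} ≤ α₁/S₂ and P_{2j} ≤ α₂/S₁, is at most α₁·E[Σ_{j∈𝒮₂}(1−H_{1j})/S₂] + α₂·E[Σ_{j∈𝒮₁}(1−H_{2j})/S₁], where each fraction is interpreted as 0 when the corresponding selected set is empty. (The Section 4 upper bound quantifying the conservativeness of the non-adaptive procedure by the expected fractions of nulls among the selected.) -/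

import Mathlib

open MeasureTheory ProbabilityTheory

lemma aux_bound {Ω : Type*} [MeasurableSpace Ω] (μ : Measure Ω) [IsProbabilityMeasure μ]
    (m : ℕ) (Q R : Ω → Fin m → ℝ) (hQ : Measurable Q) (hR : Measurable R)
    (Hb : Fin m → Bool)
    (hunif : ∀ j, Hb j = false → ∀ x ∈ Set.Icc (0:ℝ) 1, μ {ω | Q ω j ≤ x} ≤ ENNReal.ofReal x)
    (N : Finset (Fin m)) (hN : ∀ j ∈ N, Hb j = false)
    (hind : ∀ j ∈ N, IndepFun (fun ω => Q ω j) R μ)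
    (S : (Fin m → ℝ) → Finset (Fin m))
    (hS : ∀ j, MeasurableSet {p : Fin m → ℝ | j ∈ S p})
    (β : ℝ) (hβ0 : 0 < β) (hβ1 : β ≤ 1) :
    (∑ j ∈ N, μ {ω | j ∈ S (R ω) ∧ Q ω j ≤ β / (S (R ω)).card}) ≤
      ENNReal.ofReal (β * ∫ ω, (((S (R ω)).filter (fun j => Hb j = false)).card : ℝ) /
          ((S (R ω)).card : ℝ) ∂μ) := by
  -- measurability of level sets of the selection rule
  have hTmeas : ∀ T : Finset (Fin m), MeasurableSet {p : Fin m → ℝ | S p = T} := by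
    intro T
    have h : {p : Fin m → ℝ | S p = T} = ⋂ j, {p | j ∈ S p ↔ j ∈ T} := by
      ext p
      simp only [Set.mem_setOf_eq, Set.mem_iInter]
      constructor
      · intro h j; rw [h]
      · intro h; exact Finset.ext h
    rw [h]
    refine MeasurableSet.iInter fun j => ?_
    by_cases hj : j ∈ T
    · simpa [hj] using hS j
    · have he : {p : Fin m → ℝ | j ∈ S p ↔ j ∈ T} = {p : Fin m → ℝ | j ∈ S p}ᶜ := by
        ext p; simp [hj]
      rw [he]; exact (hS j).compl
  set F : Finset (Fin m) → ℝ :=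
    fun T => ((T.filter (fun j => Hb j = false)).card : ℝ) / (T.card : ℝ) with hF
  set μT : Finset (Fin m) → ENNReal := fun T => μ {ω | S (R ω) = T} with hμT
  have hμTmeas : ∀ T, MeasurableSet {ω | S (R ω) = T} := fun T => hR (hTmeas T)
  have hμTne : ∀ T, μT T ≠ ⊤ := fun T => measure_ne_top μ _
  have hFnn : ∀ T, 0 ≤ F T := fun T => div_nonneg (Nat.cast_nonneg _) (Nat.cast_nonneg _)
  -- step 1: per-feature bound
  have step1 : ∀ j ∈ N, μ {ω | j ∈ S (R ω) ∧ Q ω j ≤ β / (S (R ω)).card} ≤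
      ∑ T ∈ Finset.univ.filter (fun T : Finset (Fin m) => j ∈ T),
        ENNReal.ofReal (β / (T.card : ℝ)) * μT T := by
    intro j hj
    have hsub : {ω | j ∈ S (R ω) ∧ Q ω j ≤ β / (S (R ω)).card} ⊆
        ⋃ T ∈ Finset.univ.filter (fun T : Finset (Fin m) => j ∈ T),
          ((fun ω => Q ω j) ⁻¹' Set.Iic (β / (T.card : ℝ)) ∩ R ⁻¹' {p | S p = T}) := by
      intro ω hω
      exact Set.mem_biUnion (x := S (R ω))
        (Finset.mem_filter.2 ⟨Finset.mem_univ _, hω.1⟩) ⟨hω.2, rfl⟩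
    refine (measure_mono hsub).trans ?_
    refine (measure_biUnion_finset_le _ _).trans ?_
    refine Finset.sum_le_sum fun T hT => ?_
    have hjT : j ∈ T := (Finset.mem_filter.1 hT).2
    have hcard : (1:ℝ) ≤ (T.card : ℝ) := by
      exact_mod_cast Nat.one_le_iff_ne_zero.2 (Finset.card_ne_zero_of_mem hjT)
    have hcpos : (0:ℝ) < (T.card : ℝ) := lt_of_lt_of_le one_pos hcard
    have hmul := (hind j hj).measure_inter_preimage_eq_mul (Set.Iic (β / (T.card : ℝ)))
      {p | S p = T} measurableSet_Iic (hTmeas T)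
    rw [hmul]
    refine mul_le_mul_left ?_ _
    have : (fun ω => Q ω j) ⁻¹' Set.Iic (β / (T.card : ℝ)) = {ω | Q ω j ≤ β / (T.card : ℝ)} := rfl
    rw [this]
    refine hunif j (hN j hj) _ ⟨div_nonneg hβ0.le hcpos.le, ?_⟩
    rw [div_le_one hcpos]
    exact hβ1.trans hcard
  -- step 2: sum bound
  have step2 : (∑ j ∈ N, μ {ω | j ∈ S (R ω) ∧ Q ω j ≤ β / (S (R ω)).card}) ≤
      ∑ T : Finset (Fin m), ENNReal.ofReal (β * F T) * μT T := by
    refine (Finset.sum_le_sum step1).trans ?_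
    have hswap : (∑ j ∈ N, ∑ T ∈ Finset.univ.filter (fun T : Finset (Fin m) => j ∈ T),
        ENNReal.ofReal (β / (T.card : ℝ)) * μT T) =
        ∑ T : Finset (Fin m), ∑ j ∈ N.filter (fun j => j ∈ T),
          ENNReal.ofReal (β / (T.card : ℝ)) * μT T := by
      simp_rw [Finset.sum_filter]
      rw [Finset.sum_comm]
    rw [hswap]
    refine Finset.sum_le_sum fun T _ => ?_
    rw [Finset.sum_const, nsmul_eq_mul]
    have hcle : ((N.filter (fun j => j ∈ T)).card : ℝ) ≤
        ((T.filter (fun j => Hb j = false)).card : ℝ) := by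
      exact_mod_cast Finset.card_le_card (fun j hj => by
        rcases Finset.mem_filter.1 hj with ⟨hjN, hjT⟩
        exact Finset.mem_filter.2 ⟨hjT, hN j hjN⟩)
    calc ((N.filter (fun j => j ∈ T)).card : ENNReal) *
          (ENNReal.ofReal (β / (T.card : ℝ)) * μT T)
        = ENNReal.ofReal (((N.filter (fun j => j ∈ T)).card : ℝ) * (β / (T.card : ℝ))) * μT T := by
          rw [← ENNReal.ofReal_natCast, ← mul_assoc, ← ENNReal.ofReal_mul (Nat.cast_nonneg _)]
      _ ≤ ENNReal.ofReal (β * F T) * μT T := by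
          refine mul_le_mul_left (ENNReal.ofReal_le_ofReal ?_) _
          have : β * F T = ((T.filter (fun j => Hb j = false)).card : ℝ) * (β / (T.card : ℝ)) := by
            rw [hF]; ring
          rw [this]
          exact mul_le_mul_of_nonneg_right hcle (div_nonneg hβ0.le (Nat.cast_nonneg _))
  refine step2.trans ?_
  -- step 3: identify the RHS with the sum
  have hint : ∀ T : Finset (Fin m),
      Integrable ((({ω | S (R ω) = T}) : Set Ω).indicator (fun _ => F T)) μ :=
    fun T => (integrable_indicator_iff (hμTmeas T)).2
      (integrableOn_const (measure_ne_top μ _))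
  have hGeq : (fun ω => (((S (R ω)).filter (fun j => Hb j = false)).card : ℝ) /
      ((S (R ω)).card : ℝ)) =
      fun ω => ∑ T : Finset (Fin m), (({ω | S (R ω) = T}) : Set Ω).indicator (fun _ => F T) ω := by
    funext ω
    have : ∀ T : Finset (Fin m), (({ω | S (R ω) = T}) : Set Ω).indicator (fun _ => F T) ω =
        if S (R ω) = T then F T else 0 := by
      intro T
      by_cases h : S (R ω) = T <;> simp [Set.indicator, h]
    simp_rw [this]
    rw [Finset.sum_ite_eq Finset.univ (S (R ω)) F]
    simp [hF]
  rw [hGeq, integral_finset_sum _ (fun T _ => hint T)]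
  have hIeq : ∀ T : Finset (Fin m),
      (∫ ω, (({ω | S (R ω) = T}) : Set Ω).indicator (fun _ => F T) ω ∂μ) =
        (μT T).toReal * F T := by
    intro T
    rw [integral_indicator_const (F T) (hμTmeas T)]
    simp [hμT, smul_eq_mul, Measure.real]
  simp_rw [hIeq]
  rw [Finset.mul_sum, ENNReal.ofReal_sum_of_nonneg (fun T _ =>
    mul_nonneg hβ0.le (mul_nonneg ENNReal.toReal_nonneg (hFnn T)))]
  refine Finset.sum_le_sum fun T _ => ?_
  rw [show β * ((μT T).toReal * F T) = β * F T * (μT T).toReal by ring,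
    ENNReal.ofReal_mul (mul_nonneg hβ0.le (hFnn T)), ENNReal.ofReal_toReal (hμTne T)]



/-- Section 4 conservativeness bound.  Under the null
independence-across-studies condition and null p-values stochastically at least uniform,
the FWER for replicability analysis of the Bonferroni replicability procedure (rejecting
`j ∈ 𝒮₁ ∩ 𝒮₂` with `P1 j ≤ α₁/S₂` and `P2 j ≤ (α−α₁)/S₁`) is at most
`α₁·E[Σ_{j∈𝒮₂}(1−H_{1j})/S₂] + (α−α₁)·E[Σ_{j∈𝒮₁}(1−H_{2j})/S₁]`, each fraction being
`0` when the corresponding selected set is empty (the convention of division by zero). -/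
theorem bonferroni_replicability_fwer_adaptive_bound
    {Ω : Type*} [MeasurableSpace Ω] (μ : Measure Ω) [IsProbabilityMeasure μ]
    (m : ℕ) (P1 P2 : Ω → Fin m → ℝ) (hP1 : Measurable P1) (hP2 : Measurable P2)
    (H1 H2 : Fin m → Bool)
    (hrange1 : ∀ ω j, P1 ω j ∈ Set.Icc (0:ℝ) 1) (hrange2 : ∀ ω j, P2 ω j ∈ Set.Icc (0:ℝ) 1)
    -- null p-values are stochastically at least uniform
    (hunif1 : ∀ j, H1 j = false → ∀ x ∈ Set.Icc (0:ℝ) 1,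
      μ {ω | P1 ω j ≤ x} ≤ ENNReal.ofReal x)
    (hunif2 : ∀ j, H2 j = false → ∀ x ∈ Set.Icc (0:ℝ) 1,
      μ {ω | P2 ω j ≤ x} ≤ ENNReal.ofReal x)
    -- null independence-across-studies condition
    (hind1 : ∀ j, (H1 j = false ∨ H2 j = false) → H1 j = false →
      IndepFun (fun ω => P1 ω j) P2 μ)
    (hind2 : ∀ j, (H1 j = false ∨ H2 j = false) → H2 j = false →
      IndepFun (fun ω => P2 ω j) P1 μ)
    -- arbitrary (measurable) selection rules
    (S1 S2 : (Fin m → ℝ) → Finset (Fin m))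
    (hS1 : ∀ j, MeasurableSet {p : Fin m → ℝ | j ∈ S1 p})
    (hS2 : ∀ j, MeasurableSet {p : Fin m → ℝ | j ∈ S2 p})
    (α α₁ : ℝ) (hα : α ∈ Set.Ioo (0:ℝ) 1) (hα₁ : α₁ ∈ Set.Ioo (0:ℝ) α) :
    μ {ω | ∃ j, (H1 j = false ∨ H2 j = false) ∧
        j ∈ S1 (P1 ω) ∧ j ∈ S2 (P2 ω) ∧
        P1 ω j ≤ α₁ / (S2 (P2 ω)).card ∧ P2 ω j ≤ (α - α₁) / (S1 (P1 ω)).card}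
      ≤ ENNReal.ofReal
        (α₁ * ∫ ω, (((S2 (P2 ω)).filter (fun j => H1 j = false)).card : ℝ) /
            ((S2 (P2 ω)).card : ℝ) ∂μ +
         (α - α₁) * ∫ ω, (((S1 (P1 ω)).filter (fun j => H2 j = false)).card : ℝ) /
            ((S1 (P1 ω)).card : ℝ) ∂μ) := by
  classical
  set N1 : Finset (Fin m) := Finset.univ.filter (fun j => H1 j = false) with hN1
  set N2 : Finset (Fin m) := Finset.univ.filter (fun j => H1 j = true ∧ H2 j = false) with hN2
  set B1 : Fin m → Set Ω := fun j => {ω | j ∈ S2 (P2 ω) ∧ P1 ω j ≤ α₁ / (S2 (P2 ω)).card}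
    with hB1
  set B2 : Fin m → Set Ω := fun j => {ω | j ∈ S1 (P1 ω) ∧ P2 ω j ≤ (α - α₁) / (S1 (P1 ω)).card}
    with hB2
  have hsub : {ω | ∃ j, (H1 j = false ∨ H2 j = false) ∧
      j ∈ S1 (P1 ω) ∧ j ∈ S2 (P2 ω) ∧
      P1 ω j ≤ α₁ / (S2 (P2 ω)).card ∧ P2 ω j ≤ (α - α₁) / (S1 (P1 ω)).card} ⊆
      (⋃ j ∈ N1, B1 j) ∪ ⋃ j ∈ N2, B2 j := by
    rintro ω ⟨j, hnull, hj1, hj2, hp1, hp2⟩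
    by_cases h1 : H1 j = false
    · exact Or.inl (Set.mem_biUnion (Finset.mem_filter.2 ⟨Finset.mem_univ _, h1⟩) ⟨hj2, hp1⟩)
    · have h1' : H1 j = true := by
        cases h : H1 j
        · exact absurd h h1
        · rfl
      have h2 : H2 j = false := by
        rcases hnull with h | h
        · exact absurd h h1
        · exact h
      exact Or.inr (Set.mem_biUnion (Finset.mem_filter.2 ⟨Finset.mem_univ _, h1', h2⟩)
        ⟨hj1, hp2⟩)
  have hb1 : (∑ j ∈ N1, μ (B1 j)) ≤ ENNReal.ofReal (α₁ *
      ∫ ω, (((S2 (P2 ω)).filter (fun j => H1 j = false)).card : ℝ) /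
        ((S2 (P2 ω)).card : ℝ) ∂μ) := by
    refine aux_bound μ m P1 P2 hP1 hP2 H1 hunif1 N1
      (fun j hj => (Finset.mem_filter.1 hj).2)
      (fun j hj => hind1 j (Or.inl (Finset.mem_filter.1 hj).2) (Finset.mem_filter.1 hj).2)
      S2 hS2 α₁ hα₁.1 (le_of_lt (hα₁.2.trans hα.2))
  have hb2 : (∑ j ∈ N2, μ (B2 j)) ≤ ENNReal.ofReal ((α - α₁) *
      ∫ ω, (((S1 (P1 ω)).filter (fun j => H2 j = false)).card : ℝ) /
        ((S1 (P1 ω)).card : ℝ) ∂μ) := by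
    refine aux_bound μ m P2 P1 hP2 hP1 H2 hunif2 N2
      (fun j hj => (Finset.mem_filter.1 hj).2.2)
      (fun j hj => hind2 j (Or.inr (Finset.mem_filter.1 hj).2.2) (Finset.mem_filter.1 hj).2.2)
      S1 hS1 (α - α₁) (sub_pos.2 hα₁.2) (by linarith [hα.2, hα₁.1])
  have hnn1 : 0 ≤ α₁ * ∫ ω, (((S2 (P2 ω)).filter (fun j => H1 j = false)).card : ℝ) /
      ((S2 (P2 ω)).card : ℝ) ∂μ :=
    mul_nonneg hα₁.1.le (integral_nonneg fun ω =>
      div_nonneg (Nat.cast_nonneg _) (Nat.cast_nonneg _))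
  have hnn2 : 0 ≤ (α - α₁) * ∫ ω, (((S1 (P1 ω)).filter (fun j => H2 j = false)).card : ℝ) /
      ((S1 (P1 ω)).card : ℝ) ∂μ :=
    mul_nonneg (sub_pos.2 hα₁.2).le (integral_nonneg fun ω =>
      div_nonneg (Nat.cast_nonneg _) (Nat.cast_nonneg _))
  calc μ {ω | ∃ j, (H1 j = false ∨ H2 j = false) ∧
        j ∈ S1 (P1 ω) ∧ j ∈ S2 (P2 ω) ∧
        P1 ω j ≤ α₁ / (S2 (P2 ω)).card ∧ P2 ω j ≤ (α - α₁) / (S1 (P1 ω)).card}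
      ≤ μ ((⋃ j ∈ N1, B1 j) ∪ ⋃ j ∈ N2, B2 j) := measure_mono hsub
    _ ≤ μ (⋃ j ∈ N1, B1 j) + μ (⋃ j ∈ N2, B2 j) := measure_union_le _ _
    _ ≤ (∑ j ∈ N1, μ (B1 j)) + ∑ j ∈ N2, μ (B2 j) :=
        add_le_add (measure_biUnion_finset_le _ _) (measure_biUnion_finset_le _ _)
    _ ≤ _ := by
        refine (add_le_add hb1 hb2).trans ?_
        rw [← ENNReal.ofReal_add hnn1 hnn2]
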